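/- Let Φ : H₂(ℂ) → H₂(ℂ) be a J.T.P. homomorphism with Φ(0) = 0, Φ(I) = I, and Φ(diag(1,-1)) ∈ {I, -I}. Then for every invertible A ∈ H₂(ℂ) which is positive definite or has one positive and one negative eigenvalue, Φ(A) = Φ(diag(det A, 1)); and for every negative definite A, Φ(A) = Φ(-I) · Φ(diag(det A, 1)). -/

import Mathlib

open Matrix
open scoped ComplexOrder

abbrev M2 := Matrix (Fin 2) (Fin 2) ℂ


lemma ch2 (M : M2) : M * M = M.trace • M - M.det • 1 := by
  ext i j
  fin_cases i <;> fin_cases j <;>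
    simp [Matrix.mul_apply, Fin.sum_univ_two, Matrix.trace_fin_two, Matrix.det_fin_two,
      Matrix.one_apply] <;> ring

lemma anticomm2 (X Y : M2) (hX : X.trace = 0) (hY : Y.trace = 0) :
    X * Y + Y * X = (X * Y).trace • 1 := by
  rw [Matrix.trace_fin_two] at hX hY
  ext i j
  fin_cases i <;> fin_cases j <;>
    simp [Matrix.mul_apply, Fin.sum_univ_two, Matrix.trace_fin_two, Matrix.one_apply]
  · linear_combination (Y 0 0 - Y 1 1 + Y 1 1) * hX + (- 2 * (X 1 1) + X 1 1) * hY
  · linear_combination (Y 0 1 - Y 1 1 + Y 1 1) * hX + (X 0 1 - X 1 1 + X 1 1) * hY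
  · linear_combination (Y 1 0 - Y 1 1 + Y 1 1) * hX + (X 1 0 - X 1 1 + X 1 1) * hY
  · linear_combination (-(Y 0 0 + Y 1 1) + Y 1 1) * hX + (X 1 1) * hY



lemma herm_10 {A : M2} (hA : A.IsHermitian) : A 1 0 = (starRingEnd ℂ) (A 0 1) := by
  conv_lhs => rw [← hA.eq]
  simp [Matrix.conjTranspose_apply, RCLike.star_def]

lemma herm_00 {A : M2} (hA : A.IsHermitian) : (starRingEnd ℂ) (A 0 0) = A 0 0 := by
  conv_rhs => rw [← hA.eq]
  simp [Matrix.conjTranspose_apply, RCLike.star_def]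

lemma herm_11 {A : M2} (hA : A.IsHermitian) : (starRingEnd ℂ) (A 1 1) = A 1 1 := by
  conv_rhs => rw [← hA.eq]
  simp [Matrix.conjTranspose_apply, RCLike.star_def]

lemma herm_im00 {A : M2} (hA : A.IsHermitian) : (A 0 0).im = 0 :=
  Complex.conj_eq_iff_im.mp (herm_00 hA)

lemma herm_im11 {A : M2} (hA : A.IsHermitian) : (A 1 1).im = 0 :=
  Complex.conj_eq_iff_im.mp (herm_11 hA)

lemma herm_det_im {A : M2} (hA : A.IsHermitian) : A.det.im = 0 := by
  rw [Matrix.det_fin_two, herm_10 hA, Complex.mul_conj]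
  simp [Complex.sub_im, Complex.mul_im, herm_im00 hA, herm_im11 hA]

lemma herm_trace_im {A : M2} (hA : A.IsHermitian) : A.trace.im = 0 := by
  rw [Matrix.trace_fin_two]
  simp [Complex.add_im, herm_im00 hA, herm_im11 hA]

lemma herm_detre {A : M2} (hA : A.IsHermitian) :
    A.det.re = (A 0 0).re * (A 1 1).re - Complex.normSq (A 0 1) := by
  rw [Matrix.det_fin_two, herm_10 hA, Complex.mul_conj]
  simp [Complex.sub_re, Complex.mul_re, herm_im00 hA, herm_im11 hA]

lemma posdef_of {A : M2} (hA : A.IsHermitian) (h00 : 0 < (A 0 0).re)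
    (hdet : 0 < A.det.re) : A.PosDef := by
  refine Matrix.PosDef.of_dotProduct_mulVec_pos hA (fun x hx => ?_)
  set q : ℂ := dotProduct (star x) (A *ᵥ x) with hqdef
  have ha : (starRingEnd ℂ) (A 0 0) = A 0 0 := herm_00 hA
  have hq : q = (starRingEnd ℂ) (x 0) * (A 0 0 * x 0 + A 0 1 * x 1)
      + (starRingEnd ℂ) (x 1) * ((starRingEnd ℂ) (A 0 1) * x 0 + A 1 1 * x 1) := by
    rw [hqdef]
    simp [dotProduct, Matrix.mulVec, Fin.sum_univ_two, herm_10 hA, RCLike.star_def]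
  set w : ℂ := A 0 0 * x 0 + A 0 1 * x 1 with hwdef
  have key : A 0 0 * q = ((Complex.normSq w : ℝ) : ℂ)
      + A.det * ((Complex.normSq (x 1) : ℝ) : ℂ) := by
    rw [← Complex.mul_conj w, ← Complex.mul_conj (x 1)]
    rw [hq, Matrix.det_fin_two, herm_10 hA, hwdef]
    simp only [map_add, _root_.map_mul, ha]
    ring
  have him : q.im = 0 := by
    have e := congrArg Complex.im key
    simp [Complex.add_im, Complex.mul_im, Complex.ofReal_im, herm_im00 hA,
      herm_det_im hA] at e
    rcases e with e | e
    · exact (h00.ne' e).elim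
    · exact e
  have hre : (A 0 0).re * q.re = Complex.normSq w + A.det.re * Complex.normSq (x 1) := by
    have e := congrArg Complex.re key
    simpa [Complex.add_re, Complex.mul_re, Complex.ofReal_re, herm_im00 hA, him,
      herm_det_im hA] using e
  have hqre : 0 < q.re := by
    by_cases hx1 : x 1 = 0
    · have hx0 : x 0 ≠ 0 := by
        intro h0; apply hx; funext i; fin_cases i <;> simp [h0, hx1]
      have hwx : w = A 0 0 * x 0 := by rw [hwdef, hx1, mul_zero, add_zero]
      have hA00 : A 0 0 ≠ 0 := fun h => by simp [h] at h00
      have hw0 : 0 < Complex.normSq w := by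
        rw [hwx, Complex.normSq_mul]
        exact mul_pos (Complex.normSq_pos.mpr hA00) (Complex.normSq_pos.mpr hx0)
      nlinarith [hre, Complex.normSq_nonneg (x 1), hdet, h00]
    · have h1 : 0 < Complex.normSq (x 1) := Complex.normSq_pos.mpr hx1
      nlinarith [hre, Complex.normSq_nonneg w]
  rw [Complex.lt_def]
  exact ⟨by simpa using hqre, by simp [him]⟩

lemma posdef_diag00 {A : M2} (hA : A.PosDef) : 0 < (A 0 0).re := by
  have h := hA.dotProduct_mulVec_pos (x := ![1, 0]) (by intro h; have := congrFun h 0; simp at this)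
  rw [Complex.lt_def] at h
  have : dotProduct (star ![(1:ℂ), 0]) (A *ᵥ ![1, 0]) = A 0 0 := by
    simp [dotProduct, Matrix.mulVec, Fin.sum_univ_two]
  rw [this] at h
  simpa using h.1

lemma posdef_diag11 {A : M2} (hA : A.PosDef) : 0 < (A 1 1).re := by
  have h := hA.dotProduct_mulVec_pos (x := ![0, 1]) (by intro h; have := congrFun h 1; simp at this)
  rw [Complex.lt_def] at h
  have : dotProduct (star ![(0:ℂ), 1]) (A *ᵥ ![0, 1]) = A 1 1 := by
    simp [dotProduct, Matrix.mulVec, Fin.sum_univ_two]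
  rw [this] at h
  simpa using h.1

lemma posdef_det_re {A : M2} (hA : A.PosDef) : 0 < A.det.re := by
  have := hA.det_pos
  rw [Complex.lt_def] at this
  simpa using this.1

lemma posdef_sqrt {A : M2} (hA : A.PosDef) :
    ∃ S : M2, S.IsHermitian ∧ S * S = A ∧ (∀ B : M2, B * A = A * B → B * S = S * B) := by
  have hAh := hA.1
  have hdre : 0 < A.det.re := posdef_det_re hA
  have hdim : A.det.im = 0 := herm_det_im hAh
  have htim : A.trace.im = 0 := herm_trace_im hAh
  have htre : 0 < A.trace.re := by
    have := posdef_diag00 hA; have := posdef_diag11 hA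
    rw [Matrix.trace_fin_two]; simp [Complex.add_re]; linarith
  set r : ℝ := Real.sqrt A.det.re with hr
  have hrpos : 0 < r := Real.sqrt_pos.mpr hdre
  have hr2 : ((r : ℂ)) * (r : ℂ) = A.det := by
    have : r * r = A.det.re := Real.mul_self_sqrt hdre.le
    rw [← Complex.ofReal_mul, this]
    exact Complex.ext (by simp) (by simp [hdim])
  set n : ℝ := Real.sqrt (A.trace.re + 2 * r) with hn
  have hnpos : 0 < n := Real.sqrt_pos.mpr (by linarith)
  have hn2 : ((n : ℂ)) * (n : ℂ) = A.trace + 2 * r := by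
    have : n * n = A.trace.re + 2 * r := Real.mul_self_sqrt (by linarith)
    rw [← Complex.ofReal_mul, this]
    exact Complex.ext (by simp) (by simp [htim])
  refine ⟨((n : ℂ))⁻¹ • (A + (r : ℂ) • 1), ?_, ?_, ?_⟩
  · rw [Matrix.IsHermitian, Matrix.conjTranspose_smul, Matrix.conjTranspose_add,
      Matrix.conjTranspose_smul, hAh.eq, Matrix.conjTranspose_one]
    simp [RCLike.star_def, Complex.conj_ofReal]
  · have hncne : ((n:ℂ)) ≠ 0 := by exact_mod_cast hnpos.ne'
    have expand : (A + (r : ℂ) • 1) * (A + (r : ℂ) • 1)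
        = (A.trace + 2 * r) • A + ((r:ℂ) * r - A.det) • 1 := by
      rw [mul_add, add_mul, add_mul]
      simp only [Matrix.smul_mul, Matrix.mul_smul, smul_smul, mul_one, one_mul]
      rw [ch2 A]
      module
    calc ((n : ℂ))⁻¹ • (A + (r : ℂ) • 1) * (((n : ℂ))⁻¹ • (A + (r : ℂ) • 1))
        = (((n:ℂ))⁻¹ * ((n:ℂ))⁻¹) • ((A + (r:ℂ) • 1) * (A + (r:ℂ) • 1)) := by
          rw [Matrix.smul_mul, Matrix.mul_smul, smul_smul]
      _ = (((n:ℂ))⁻¹ * ((n:ℂ))⁻¹) • ((A.trace + 2 * r) • A) := by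
          rw [expand, hr2, sub_self, zero_smul, add_zero]
      _ = ((((n:ℂ))⁻¹ * ((n:ℂ))⁻¹) * (A.trace + 2 * r)) • A := by rw [smul_smul]
      _ = A := by
          rw [← hn2, show ((n:ℂ))⁻¹ * ((n:ℂ))⁻¹ * ((n:ℂ) * (n:ℂ)) = 1 by field_simp,
            one_smul]
  · intro B hB
    rw [Matrix.mul_smul, Matrix.smul_mul, mul_add, add_mul, hB, Matrix.mul_smul,
      Matrix.smul_mul, mul_one, one_mul]


def Refl (V : M2) : Prop := V.IsHermitian ∧ V.trace = 0 ∧ V * V = 1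

lemma refl_det {V : M2} (h : Refl V) : V.det = -1 := by
  have h1 : (1 : M2) = V.trace • V - V.det • 1 := h.2.2 ▸ ch2 V
  have := congrFun (congrFun h1 0) 0
  simp [h.2.1, Matrix.one_apply] at this
  linear_combination this

def sigma1 : M2 := !![0, 1; 1, 0]

lemma refl_sigma1 : Refl sigma1 := by
  refine ⟨?_, ?_, ?_⟩
  · ext i j; fin_cases i <;> fin_cases j <;> simp [sigma1, Matrix.conjTranspose_apply]
  · simp [sigma1, Matrix.trace_fin_two]
  · ext i j; fin_cases i <;> fin_cases j <;>
      simp [sigma1, Matrix.mul_apply, Fin.sum_univ_two, Matrix.one_apply]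

lemma exists_perp (M : M2) (hM : M.IsHermitian) :
    ∃ T : M2, Refl T ∧ (T * M).trace = 0 := by
  have h10 : M 1 0 = (starRingEnd ℂ) (M 0 1) := by
    conv_lhs => rw [← hM.eq]
    simp [Matrix.conjTranspose_apply, RCLike.star_def]
  by_cases hz : M 0 1 = 0
  · refine ⟨sigma1, refl_sigma1, ?_⟩
    simp [sigma1, Matrix.trace_fin_two, Matrix.mul_apply, Fin.sum_univ_two,
      Matrix.vecMul, dotProduct, hz, h10]
  · set z := M 0 1 with hzdef
    set w : ℂ := Complex.I * z / (‖z‖ : ℂ) with hw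
    have habs : ‖z‖ ≠ 0 := by simpa using hz
    have habsw : ‖w‖ = 1 := by
      rw [hw, norm_div, norm_mul]
      simp [habs]
    have hww : w * (starRingEnd ℂ) w = 1 := by
      rw [Complex.mul_conj, Complex.normSq_eq_norm_sq, habsw]
      norm_num
    have h1 : w * (starRingEnd ℂ) z = Complex.I * (‖z‖ : ℂ) := by
      have habsc : (‖z‖ : ℂ) ≠ 0 := by exact_mod_cast habs
      rw [hw, div_mul_eq_mul_div, mul_assoc, Complex.mul_conj, Complex.normSq_eq_norm_sq,
        div_eq_iff habsc]
      push_cast; ring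
    have h2 : (starRingEnd ℂ) w * z = - (Complex.I * (‖z‖ : ℂ)) := by
      have h3 : (starRingEnd ℂ) (w * (starRingEnd ℂ) z) = (starRingEnd ℂ) w * z :=
        (RingHom.map_mul (starRingEnd ℂ) w ((starRingEnd ℂ) z)).trans
          (by rw [Complex.conj_conj])
      rw [← h3, h1, RingHom.map_mul, Complex.conj_I, Complex.conj_ofReal]; ring
    have key : w * (starRingEnd ℂ) z + (starRingEnd ℂ) w * z = 0 := by
      rw [h1, h2]; ring
    refine ⟨!![0, w; (starRingEnd ℂ) w, 0], ⟨?_, ?_, ?_⟩, ?_⟩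
    · ext i j; fin_cases i <;> fin_cases j <;> simp [Matrix.conjTranspose_apply]
    · simp [Matrix.trace_fin_two]
    · ext i j; fin_cases i <;> fin_cases j <;>
        simp [Matrix.mul_apply, Fin.sum_univ_two, Matrix.one_apply, hww, mul_comm]
    · simp only [Matrix.trace_fin_two, Matrix.mul_apply, Fin.sum_univ_two]
      simp [h10]
      linear_combination key



lemma refl_conj {V₂ V₃ : M2} (h2 : Refl V₂) (h3 : Refl V₃) :
    ∃ T : M2, Refl T ∧ T * V₃ * T = V₂ := by
  set τ : ℂ := (V₂ * V₃).trace with hτ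
  have hanti : V₂ * V₃ + V₃ * V₂ = τ • 1 := anticomm2 _ _ h2.2.1 h3.2.1
  set H : M2 := V₂ + V₃ with hH
  have hHh : H.IsHermitian := h2.1.add h3.1
  have hH2 : H * H = (2 + τ) • 1 := by
    have e : H * H = V₂*V₂ + (V₂*V₃ + V₃*V₂) + V₃*V₃ := by
      simp only [hH, mul_add, add_mul]; abel
    rw [e, h2.2.2, h3.2.2, hanti]
    have : (2 : ℂ) + τ = 1 + τ + 1 := by ring
    rw [this, add_smul, add_smul, one_smul]
  have h1100 : H 1 1 = - H 0 0 := by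
    have := h2.2.1; have := h3.2.1
    have htr : H.trace = 0 := by
      rw [hH, Matrix.trace_add, h2.2.1, h3.2.1, add_zero]
    rw [Matrix.trace_fin_two] at htr
    linear_combination htr
  have h10 : H 1 0 = (starRingEnd ℂ) (H 0 1) := by
    conv_lhs => rw [← hHh.eq]
    simp [Matrix.conjTranspose_apply, RCLike.star_def]
  have h00 : H 0 0 = (starRingEnd ℂ) (H 0 0) := by
    conv_lhs => rw [← hHh.eq]
    simp [Matrix.conjTranspose_apply, RCLike.star_def]
  set ρ : ℝ := Complex.normSq (H 0 0) + Complex.normSq (H 0 1) with hρdef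
  have hρ : 2 + τ = (ρ : ℂ) := by
    have e1 := congrFun (congrFun hH2 0) 0
    simp [Matrix.mul_apply, Fin.sum_univ_two, Matrix.one_apply] at e1
    rw [← e1, hρdef]
    push_cast
    rw [← Complex.mul_conj (H 0 0), ← Complex.mul_conj (H 0 1)]
    rw [← h00, ← h10]
  by_cases hρ0 : ρ = 0
  · -- antipodal case : H = 0
    have hH0 : H = 0 := by
      have hn1 : Complex.normSq (H 0 0) = 0 ∧ Complex.normSq (H 0 1) = 0 := by
        constructor <;> nlinarith [Complex.normSq_nonneg (H 0 0), Complex.normSq_nonneg (H 0 1),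
          hρdef ▸ hρ0]
      have e00 : H 0 0 = 0 := Complex.normSq_eq_zero.mp hn1.1
      have e01 : H 0 1 = 0 := Complex.normSq_eq_zero.mp hn1.2
      have e10 : H 1 0 = 0 := by rw [h10, e01, map_zero]
      have e11 : H 1 1 = 0 := by rw [h1100, e00, neg_zero]
      ext i j; fin_cases i <;> fin_cases j <;> simp [e00, e01, e10, e11]
    have hV2 : V₂ = -V₃ := eq_neg_of_add_eq_zero_left (hH ▸ hH0)
    obtain ⟨T, hT, htr⟩ := exists_perp V₃ h3.1
    refine ⟨T, hT, ?_⟩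
    have hanti' : T * V₃ + V₃ * T = 0 := by
      rw [anticomm2 _ _ hT.2.1 h3.2.1, htr, zero_smul]
    have hTV : T * V₃ = -(V₃ * T) := eq_neg_of_add_eq_zero_left hanti'
    calc T * V₃ * T = (-(V₃ * T)) * T := by rw [hTV]
      _ = -(V₃ * (T * T)) := by rw [neg_mul, mul_assoc]
      _ = -V₃ := by rw [hT.2.2, mul_one]
      _ = V₂ := hV2.symm
  · have hρnn : 0 ≤ ρ := by
      rw [hρdef]; exact add_nonneg (Complex.normSq_nonneg _) (Complex.normSq_nonneg _)
    have hρpos : 0 < ρ := lt_of_le_of_ne hρnn (Ne.symm hρ0)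
    set c : ℝ := (Real.sqrt ρ)⁻¹ with hc
    have hcc : (c : ℂ) * (c : ℂ) * (2 + τ) = 1 := by
      rw [hρ]
      have : c * c * ρ = 1 := by
        rw [hc, ← mul_inv, Real.mul_self_sqrt hρpos.le, inv_mul_cancel₀ hρpos.ne']
      have h1 : ((c * c * ρ : ℝ) : ℂ) = 1 := by rw [this]; norm_num
      calc (c:ℂ) * (c:ℂ) * (ρ:ℂ) = ((c * c * ρ : ℝ) : ℂ) := by push_cast; ring
        _ = 1 := h1
    set T : M2 := (c : ℂ) • H with hT
    have hTherm : T.IsHermitian := by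
      rw [hT, Matrix.IsHermitian, Matrix.conjTranspose_smul, hHh.eq, Complex.star_def,
        Complex.conj_ofReal]
    have hTtr : T.trace = 0 := by
      rw [hT, Matrix.trace_smul]
      have htr : H.trace = 0 := by
        rw [hH, Matrix.trace_add, h2.2.1, h3.2.1, add_zero]
      rw [htr, smul_zero]
    have hTT : T * T = 1 := by
      rw [hT, Matrix.smul_mul, Matrix.mul_smul, smul_smul, hH2, smul_smul, hcc, one_smul]
    refine ⟨T, ⟨hTherm, hTtr, hTT⟩, ?_⟩
    have hV32 : V₃ * V₂ = τ • 1 - V₂ * V₃ := eq_sub_of_add_eq' hanti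
    have h232 : V₂ * (V₃ * V₂) = τ • V₂ - V₃ := by
      calc V₂ * (V₃ * V₂) = V₂ * (τ • 1 - V₂ * V₃) := by rw [hV32]
        _ = τ • V₂ - V₂ * V₂ * V₃ := by
            rw [mul_sub, mul_smul_comm, mul_one, mul_assoc]
        _ = τ • V₂ - V₃ := by rw [h2.2.2, one_mul]
    have hHVH : H * V₃ * H = (2 + τ) • V₂ := by
      have e : H * V₃ * H = V₂*(V₃*V₂) + V₂*(V₃*V₃) + V₃*(V₃*V₂) + V₃*(V₃*V₃) := by
        simp only [hH, mul_add, add_mul, mul_assoc]; abel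
      have e2 : V₃*(V₃*V₂) = V₂ := by rw [← mul_assoc, h3.2.2, one_mul]
      rw [e, h232, h3.2.2, mul_one, mul_one, e2]
      have : (2 : ℂ) + τ = τ + 1 + 1 := by ring
      rw [this, add_smul, add_smul, one_smul]
      abel
    calc T * V₃ * T = ((c:ℂ) * (c:ℂ)) • (H * V₃ * H) := by
          rw [hT, Matrix.smul_mul, Matrix.smul_mul, Matrix.mul_smul, smul_smul]
      _ = (((c:ℂ) * (c:ℂ)) * (2 + τ)) • V₂ := by rw [hHVH, smul_smul]
      _ = V₂ := by rw [hcc, one_smul]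



noncomputable def Jm : M2 := Matrix.diagonal ![(1 : ℂ), -1]

lemma refl_J : Refl Jm := by
  refine ⟨?_, ?_, ?_⟩
  · ext i j; fin_cases i <;> fin_cases j <;>
      simp [Jm, Matrix.conjTranspose_apply, Matrix.diagonal_apply]
  · simp [Jm, Matrix.trace_fin_two, Matrix.diagonal_apply]
  · ext i j; fin_cases i <;> fin_cases j <;>
      simp [Jm, Matrix.mul_apply, Fin.sum_univ_two, Matrix.diagonal_apply, Matrix.one_apply]

section Phi
variable (Φ : M2 → M2)
variable (hjtp : ∀ A B : M2, A.IsHermitian → B.IsHermitian → Φ (A * B * A) = Φ A * Φ B * Φ A)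
variable (h1 : Φ 1 = 1)
variable (ε : ℂ) (hε2 : ε * ε = 1) (hJε : Φ Jm = ε • 1)

include hjtp h1 in
lemma phi_mul_self {S : M2} (hS : S.IsHermitian) : Φ (S * S) = Φ S * Φ S := by
  have e : S * S = S * 1 * S := by rw [mul_one]
  rw [e, hjtp S 1 hS Matrix.isHermitian_one, h1, mul_one]

include hjtp h1 hJε in
lemma phi_refl {W : M2} (hW : Refl W) : Φ W = ε • 1 := by
  obtain ⟨T, hT, hTJT⟩ := refl_conj hW refl_J
  have e := hjtp T Jm hT.1 refl_J.1
  rw [hTJT, hJε] at e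
  rw [e, mul_smul_comm, mul_one, smul_mul_assoc, ← phi_mul_self Φ hjtp h1 hT.1, hT.2.2, h1]

include hjtp h1 hε2 hJε in
lemma phi_conj {T B : M2} (hT : Refl T) (hB : B.IsHermitian) : Φ (T * B * T) = Φ B := by
  rw [hjtp T B hT.1 hB, phi_refl Φ hjtp h1 ε hJε hT,
    smul_mul_assoc, one_mul, mul_smul_comm, mul_one, smul_smul, hε2, one_smul]

end Phi


lemma herm_real_smul {A : M2} (hA : A.IsHermitian) (r : ℂ) (hr : r.im = 0) :
    (r • A).IsHermitian := by
  rw [Matrix.IsHermitian, Matrix.conjTranspose_smul, hA.eq, RCLike.star_def,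
    Complex.conj_eq_iff_im.mpr hr]

lemma herm_mul_comm {A B : M2} (hA : A.IsHermitian) (hB : B.IsHermitian)
    (hAB : A * B = B * A) : (A * B).IsHermitian := by
  rw [Matrix.IsHermitian, Matrix.conjTranspose_mul, hA.eq, hB.eq, ← hAB]

lemma indef_decomp {A : M2} (hA : A.IsHermitian) (hdlt : A.det.re < 0) :
    ∃ P S V : M2, P.PosDef ∧ P.det = -A.det ∧ S.IsHermitian ∧ S * S = P ∧
      Refl V ∧ S * V * S = A := by
  set t : ℂ := A.trace with ht
  set d : ℂ := A.det with hd
  have htim : t.im = 0 := herm_trace_im hA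
  have hdim : d.im = 0 := herm_det_im hA
  have htreal : t = ((t.re : ℝ) : ℂ) := (Complex.ext (by simp) (by simp [htim])).symm
  have hdreal : d = ((d.re : ℝ) : ℂ) := (Complex.ext (by simp) (by simp [hdim])).symm
  have hdne : d ≠ 0 := by
    intro h; rw [h] at hdlt; simp at hdlt
  have hdne' : (-d) ≠ 0 := neg_ne_zero.mpr hdne
  set D : ℝ := Real.sqrt (t.re ^ 2 - 4 * d.re) with hD
  have hDpos : 0 < D := Real.sqrt_pos.mpr (by nlinarith [sq_nonneg t.re])
  have hDcne : ((D : ℂ)) ≠ 0 := by exact_mod_cast hDpos.ne'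
  have hD2 : ((D : ℂ)) * (D : ℂ) = t * t - 4 * d := by
    have hre : D * D = t.re ^ 2 - 4 * d.re := Real.mul_self_sqrt (by nlinarith [sq_nonneg t.re])
    have e1 : ((D:ℂ) * (D:ℂ)).re = D * D := by rw [← Complex.ofReal_mul]; simp
    have e2 : ((D:ℂ) * (D:ℂ)).im = 0 := by rw [← Complex.ofReal_mul]; simp
    refine Complex.ext ?_ ?_
    · rw [e1, hre]; simp [Complex.sub_re, Complex.mul_re, htim]; ring
    · rw [e2]; simp [Complex.sub_im, Complex.mul_im, htim, hdim]
  have hAA : A * A = t • A - d • 1 := ch2 A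
  set P : M2 := ((D : ℂ))⁻¹ • (t • A - (2 * d) • 1) with hP
  have hDP : (D : ℂ) • P = t • A - (2 * d) • 1 := by
    rw [hP, smul_smul, mul_inv_cancel₀ hDcne, one_smul]
  have hPA : P * A = A * P := by
    rw [hP]
    simp only [Matrix.smul_mul, Matrix.mul_smul, Matrix.sub_mul, Matrix.mul_sub,
      one_mul, mul_one]
  have hPherm : P.IsHermitian := by
    have h1 : (t • A).IsHermitian := herm_real_smul hA t htim
    have h2 : ((2*d) • (1 : M2)).IsHermitian :=
      herm_real_smul Matrix.isHermitian_one (2*d) (by simp [Complex.mul_im, hdim])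
    have h3 : ((D:ℂ)⁻¹).im = 0 := by
      rw [← Complex.ofReal_inv]; simp
    exact herm_real_smul (h1.sub h2) _ h3
  have hinner : (t • A - (2*d) • 1) * (t • A - (2*d) • 1) = (t*t - 4*d) • (A * A) := by
    simp only [Matrix.sub_mul, Matrix.mul_sub, Matrix.smul_mul, Matrix.mul_smul,
      smul_smul, mul_one, one_mul]
    rw [hAA]
    module
  have hPP : P * P = A * A := by
    rw [hP, Matrix.smul_mul, Matrix.mul_smul, smul_smul, hinner, smul_smul]
    rw [← hD2]
    rw [show ((D:ℂ))⁻¹ * ((D:ℂ))⁻¹ * ((D:ℂ) * (D:ℂ)) = 1 by field_simp, one_smul]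
  have hPdet : P.det = -d := by
    have h1 : ((D:ℂ) • P).det = ((D:ℂ))^2 * P.det := by
      rw [Matrix.det_smul]; norm_num
    have h2 : ((D:ℂ) • P).det = d * (4 * d - t * t) := by
      rw [hDP, Matrix.det_fin_two]
      simp only [Matrix.sub_apply, Matrix.smul_apply, Matrix.one_apply, smul_eq_mul]
      have hdd : d = A 0 0 * A 1 1 - A 0 1 * A 1 0 := Matrix.det_fin_two A
      have htt : t = A 0 0 + A 1 1 := Matrix.trace_fin_two A
      norm_num
      linear_combination (-(t*t)) * hdd + 2*d*t * htt
    have h3 : ((D:ℂ))^2 * P.det = ((D:ℂ))^2 * (-d) := by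
      rw [← h1, h2, pow_two, hD2]; ring
    exact mul_left_cancel₀ (pow_ne_zero _ hDcne) h3
  have hP00 : P 0 0 = (D:ℂ)⁻¹ * (t * A 0 0 - 2 * d) := by
    rw [hP]
    simp [Matrix.smul_apply, Matrix.sub_apply, Matrix.one_apply]
  have hP00re : 0 < (P 0 0).re := by
    have ha00 : A 0 0 = (((A 0 0).re : ℝ) : ℂ) :=
      (Complex.ext (by simp) (by simp [herm_im00 hA])).symm
    have e : P 0 0 = (((D⁻¹ * (t.re * (A 0 0).re - 2 * d.re) : ℝ)) : ℂ) := by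
      rw [hP00]
      conv_lhs => rw [htreal, hdreal, ha00]
      push_cast
      ring
    rw [e, Complex.ofReal_re]
    have hdetre := herm_detre hA
    rw [← hd] at hdetre
    have htt : t.re = (A 0 0).re + (A 1 1).re := by
      rw [ht, Matrix.trace_fin_two]
      simp [Complex.add_re]
    have keyfac : t.re * (A 0 0).re - 2 * d.re
        = (A 0 0).re ^ 2 + Complex.normSq (A 0 1) - d.re := by
      rw [htt]; linear_combination -hdetre
    have hfac : 0 < t.re * (A 0 0).re - 2 * d.re := by
      rw [keyfac]
      have := Complex.normSq_nonneg (A 0 1)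
      have := sq_nonneg (A 0 0).re
      linarith
    positivity
  have hPpos : P.PosDef := posdef_of hPherm hP00re (by
    rw [hPdet]; simp [Complex.neg_re]; linarith)
  obtain ⟨S, hSh, hSS, hScomm⟩ := posdef_sqrt hPpos
  set Q : M2 := (D : ℂ) • 1 - P with hQ
  have hQP : Q * P = (-d) • 1 := by
    rw [hQ, Matrix.sub_mul, Matrix.smul_mul, one_mul, hPP, hDP, hAA]
    module
  set V : M2 := (-d)⁻¹ • (A * Q) with hV
  have hVP : V * P = A := by
    rw [hV, Matrix.smul_mul, mul_assoc, hQP, Matrix.mul_smul, mul_one, smul_smul,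
      inv_mul_cancel₀ hdne', one_smul]
  have hQA : Q * A = A * Q := by
    rw [hQ, Matrix.sub_mul, Matrix.mul_sub, Matrix.smul_mul, Matrix.mul_smul,
      one_mul, mul_one, hPA]
  have hQPc : Q * P = P * Q := by
    rw [hQ]
    simp only [Matrix.sub_mul, Matrix.mul_sub, Matrix.smul_mul, Matrix.mul_smul,
      one_mul, mul_one]
  have hAQP : (A * Q) * P = P * (A * Q) := by
    calc A * Q * P = A * (Q * P) := mul_assoc _ _ _
      _ = A * (P * Q) := by rw [hQPc]
      _ = (A * P) * Q := (mul_assoc _ _ _).symm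
      _ = (P * A) * Q := by rw [hPA]
      _ = P * (A * Q) := mul_assoc _ _ _
  have hVPc : V * P = P * V := by
    calc V * P = ((-d)⁻¹ • (A * Q)) * P := by rw [hV]
      _ = (-d)⁻¹ • ((A * Q) * P) := Matrix.smul_mul _ _ _
      _ = (-d)⁻¹ • (P * (A * Q)) := by rw [hAQP]
      _ = P * ((-d)⁻¹ • (A * Q)) := (Matrix.mul_smul _ _ _).symm
      _ = P * V := by rw [← hV]
  have hSV : V * S = S * V := hScomm V hVPc
  have hSVS : S * V * S = A := by
    calc S * V * S = (V * S) * S := by rw [← hSV]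
      _ = V * (S * S) := mul_assoc _ _ _
      _ = V * P := by rw [hSS]
      _ = A := hVP
  -- Refl V
  have hQherm : Q.IsHermitian := by
    have h1 : ((D:ℂ) • (1 : M2)).IsHermitian :=
      herm_real_smul Matrix.isHermitian_one _ (by simp)
    exact h1.sub hPherm
  have hVherm : V.IsHermitian := by
    have h1 : (A * Q).IsHermitian := herm_mul_comm hA hQherm hQA.symm
    have h2 : ((-d)⁻¹).im = 0 := by
      rw [hdreal]
      rw [show (-((d.re : ℝ) : ℂ))⁻¹ = (((-(d.re))⁻¹ : ℝ) : ℂ) by push_cast; ring]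
      simp
    exact herm_real_smul h1 _ h2
  have htrAA : (A * A).trace = t * t - 2 * d := by
    rw [hAA, Matrix.trace_sub, Matrix.trace_smul, Matrix.trace_smul, Matrix.trace_one,
      ← ht]
    simp [smul_eq_mul, Fintype.card_fin]
    ring
  have hAP : (D:ℂ) • (A * P) = t • (A * A) - (2*d) • A := by
    rw [← Matrix.mul_smul, hDP, Matrix.mul_sub, Matrix.mul_smul, Matrix.mul_smul, mul_one]
  have htrAP : (A * P).trace = t * (D:ℂ) := by
    have e := congrArg Matrix.trace hAP
    rw [Matrix.trace_smul, Matrix.trace_sub, Matrix.trace_smul, Matrix.trace_smul,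
      htrAA, ← ht] at e
    have e2 : (D:ℂ) * (A*P).trace = (D:ℂ) * (t * (D:ℂ)) := by
      rw [smul_eq_mul] at e
      rw [e]
      simp only [smul_eq_mul]
      linear_combination (-t) * hD2
    exact mul_left_cancel₀ hDcne e2
  have hAQ : A * Q = (D:ℂ) • A - A * P := by
    rw [hQ, Matrix.mul_sub, Matrix.mul_smul, mul_one]
  have htrV : V.trace = 0 := by
    rw [hV, Matrix.trace_smul, hAQ, Matrix.trace_sub, Matrix.trace_smul, htrAP, ← ht]
    simp only [smul_eq_mul]
    ring
  have hAu : IsUnit (A * A) := by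
    have : IsUnit A := (Matrix.isUnit_iff_isUnit_det A).mpr
      (isUnit_iff_ne_zero.mpr (by rw [← hd]; exact hdne))
    exact this.mul this
  have hVV : V * V = 1 := by
    have e1 : (V*V)*(A*A) = (V*P)*(V*P) := by
      rw [← hPP]
      calc (V*V)*(P*P) = V*(V*(P*P)) := mul_assoc _ _ _
        _ = V*((V*P)*P) := by rw [← mul_assoc V P P]
        _ = V*((P*V)*P) := by rw [hVPc]
        _ = V*(P*(V*P)) := by rw [mul_assoc P V (P)]
        _ = (V*P)*(V*P) := by rw [← mul_assoc]
    rw [hVP] at e1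
    exact hAu.mul_right_cancel (by rw [e1, one_mul])
  exact ⟨P, S, V, hPpos, by rw [hPdet, hd], hSh, hSS, ⟨hVherm, htrV, hVV⟩, hSVS⟩
lemma det_neg_of_indef {A : M2} (hA : A.IsHermitian) (hu : IsUnit A)
    (h1 : ¬ A.PosDef) (h2 : ¬ (-A).PosDef) : A.det.re < 0 := by
  have hdim := herm_det_im hA
  have hd0 : A.det ≠ 0 :=
    isUnit_iff_ne_zero.mp ((Matrix.isUnit_iff_isUnit_det A).mp hu)
  have hdre0 : A.det.re ≠ 0 := fun h => hd0 (Complex.ext (by simp [h]) (by simp [hdim]))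
  rcases lt_trichotomy A.det.re 0 with h | h | h
  · exact h
  · exact (hdre0 h).elim
  · exfalso
    have hdetneg : (-A).det = A.det := by
      rw [Matrix.det_fin_two, Matrix.det_fin_two]
      simp [Matrix.neg_apply]
    rcases lt_trichotomy (A 0 0).re 0 with ha | ha | ha
    · apply h2
      apply posdef_of hA.neg
      · have : ((-A) 0 0) = -(A 0 0) := by simp [Matrix.neg_apply]
        rw [this, Complex.neg_re]; linarith
      · rw [hdetneg]; exact h
    · have hdetre := herm_detre hA
      rw [ha] at hdetre
      have := Complex.normSq_nonneg (A 0 1)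
      nlinarith
    · exact h1 (posdef_of hA ha h)

lemma diagherm (x y : ℂ) (hx : x.im = 0) (hy : y.im = 0) :
    (Matrix.diagonal ![x, y]).IsHermitian := by
  ext i j
  fin_cases i <;> fin_cases j <;>
    simp [Matrix.conjTranspose_apply, Matrix.diagonal_apply, RCLike.star_def,
      Complex.conj_eq_iff_im.mpr hx, Complex.conj_eq_iff_im.mpr hy]

theorem jtp_det_reduction
    (Φ : Matrix (Fin 2) (Fin 2) ℂ → Matrix (Fin 2) (Fin 2) ℂ)
    (hherm : ∀ A, A.IsHermitian → (Φ A).IsHermitian)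
    (hjtp : ∀ A B, A.IsHermitian → B.IsHermitian → Φ (A * B * A) = Φ A * Φ B * Φ A)
    (h0 : Φ 0 = 0) (h1 : Φ 1 = 1)
    (hJ : Φ (Matrix.diagonal ![(1 : ℂ), -1]) = 1 ∨ Φ (Matrix.diagonal ![(1 : ℂ), -1]) = -1) :
    (∀ A : Matrix (Fin 2) (Fin 2) ℂ, A.IsHermitian → IsUnit A →
        (A.PosDef ∨ (¬ A.PosDef ∧ ¬ (-A).PosDef)) →
        Φ A = Φ (Matrix.diagonal ![A.det, 1])) ∧
    (∀ A : Matrix (Fin 2) (Fin 2) ℂ, A.IsHermitian → (-A).PosDef →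
        Φ A = Φ (-1) * Φ (Matrix.diagonal ![A.det, 1])) := by
  classical
  obtain ⟨ε, hε2, hJε⟩ : ∃ ε : ℂ, ε * ε = 1 ∧ Φ Jm = ε • 1 := by
    rcases hJ with h | h
    · exact ⟨1, by ring, by rw [show Φ Jm = Φ (Matrix.diagonal ![(1:ℂ), -1]) from rfl, h,
        one_smul]⟩
    · exact ⟨-1, by ring, by rw [show Φ Jm = Φ (Matrix.diagonal ![(1:ℂ), -1]) from rfl, h,
        neg_smul, one_smul]⟩
  have hεne : ε ≠ 0 := by intro h; rw [h] at hε2; simp at hε2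
  have cancelε : ∀ X Y : M2, ε • X = ε • Y → X = Y := by
    intro X Y h
    calc X = (ε * ε) • X := by rw [hε2, one_smul]
      _ = ε • (ε • X) := (smul_smul _ _ _).symm
      _ = ε • (ε • Y) := by rw [h]
      _ = (ε * ε) • Y := smul_smul _ _ _
      _ = Y := by rw [hε2, one_smul]
  have hrefl : ∀ {W : M2}, Refl W → Φ W = ε • 1 :=
    fun hW => phi_refl Φ hjtp h1 ε hJε hW
  have hconj : ∀ {T B : M2}, Refl T → B.IsHermitian → Φ (T * B * T) = Φ B :=
    fun hT hB => phi_conj Φ hjtp h1 ε hε2 hJε hT hB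
  have hmulself : ∀ {S : M2}, S.IsHermitian → Φ (S * S) = Φ S * Φ S :=
    fun hS => phi_mul_self Φ hjtp h1 hS
  have hscale : ∀ (r : ℂ), r.im = 0 → ∀ W : M2, Refl W → Φ (r • W) = Φ (r • sigma1) := by
    intro r hrim W hW
    obtain ⟨T, hT, hTrel⟩ := refl_conj hW refl_sigma1
    have e : T * (r • sigma1) * T = r • W := by
      rw [Matrix.mul_smul, Matrix.smul_mul, hTrel]
    rw [← e, hconj hT (herm_real_smul refl_sigma1.1 r hrim)]
  -- main positive definite case
  have main_pd : ∀ A : M2, A.PosDef → Φ A = Φ (Matrix.diagonal ![A.det, 1]) := by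
    intro A hApd
    have hAh := hApd.1
    have hdre : 0 < A.det.re := posdef_det_re hApd
    have hdim : A.det.im = 0 := herm_det_im hAh
    set r : ℝ := Real.sqrt A.det.re with hr
    have hrpos : 0 < r := Real.sqrt_pos.mpr hdre
    have hrcne : ((r : ℂ)) ≠ 0 := by exact_mod_cast hrpos.ne'
    have hr2 : ((r : ℂ)) * (r : ℂ) = A.det := by
      rw [← Complex.ofReal_mul, Real.mul_self_sqrt hdre.le]
      exact Complex.ext (by simp) (by simp [hdim])
    obtain ⟨S, hSh, hSS, -⟩ := posdef_sqrt hApd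
    obtain ⟨V, hVrefl, hVtr⟩ := exists_perp A hAh
    set X : M2 := S * V * S with hX
    have hXh : X.IsHermitian := by
      rw [hX, Matrix.IsHermitian, Matrix.conjTranspose_mul, Matrix.conjTranspose_mul,
        hSh.eq, hVrefl.1.eq, ← mul_assoc]
    have htrX : X.trace = 0 := by
      rw [hX, mul_assoc, Matrix.trace_mul_comm, mul_assoc, hSS]
      exact hVtr
    have hdetX : X.det = -A.det := by
      rw [hX, Matrix.det_mul, Matrix.det_mul, refl_det hVrefl]
      have hss : S.det * S.det = A.det := by rw [← Matrix.det_mul, hSS]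
      linear_combination (-1 : ℂ) * hss
    have hXX : X * X = A.det • 1 := by
      rw [ch2 X, htrX, hdetX, zero_smul, zero_sub, neg_smul, neg_neg]
    set V₂ : M2 := ((r : ℂ))⁻¹ • X with hV₂
    have hV₂refl : Refl V₂ := by
      refine ⟨herm_real_smul hXh _ (by rw [← Complex.ofReal_inv]; simp), ?_, ?_⟩
      · rw [hV₂, Matrix.trace_smul, htrX, smul_zero]
      · rw [hV₂, Matrix.smul_mul, Matrix.mul_smul, smul_smul, hXX, smul_smul]
        rw [show ((r:ℂ))⁻¹ * ((r:ℂ))⁻¹ * A.det = 1 by rw [← hr2]; field_simp, one_smul]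
    have hXr : X = (r : ℂ) • V₂ := by
      rw [hV₂, smul_smul, mul_inv_cancel₀ hrcne, one_smul]
    have hφA : Φ A = Φ S * Φ S := by rw [← hSS, hmulself hSh]
    have hφX : Φ X = ε • Φ A := by
      rw [hX, hjtp S V hSh hVrefl.1, hrefl hVrefl, hφA, mul_smul_comm, mul_one,
        smul_mul_assoc]
    set S' : M2 := Matrix.diagonal ![(r : ℂ), 1] with hS'
    have hS'h : S'.IsHermitian := diagherm _ _ (by simp) (by simp)
    have hS'S' : S' * S' = Matrix.diagonal ![A.det, 1] := by
      ext i j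
      fin_cases i <;> fin_cases j <;>
        simp [hS', Matrix.mul_apply, Fin.sum_univ_two, Matrix.diagonal_apply, hr2]
    have hX' : S' * sigma1 * S' = (r : ℂ) • sigma1 := by
      ext i j
      fin_cases i <;> fin_cases j <;>
        simp [hS', sigma1, Matrix.mul_apply, Fin.sum_univ_two, Matrix.diagonal_apply,
          Matrix.smul_apply]
    have hφDg : Φ ((r : ℂ) • sigma1) = ε • Φ (Matrix.diagonal ![A.det, 1]) := by
      rw [← hX', hjtp S' sigma1 hS'h refl_sigma1.1, hrefl refl_sigma1,
        mul_smul_comm, mul_one, smul_mul_assoc, ← hmulself hS'h, hS'S']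
    have hlink : Φ X = Φ ((r : ℂ) • sigma1) := by
      rw [hXr]; exact hscale _ (by simp) V₂ hV₂refl
    apply cancelε
    rw [← hφX, hlink, hφDg]
  constructor
  · intro A hAh hu hcase
    rcases hcase with hpd | ⟨hnpd, hnnd⟩
    · exact main_pd A hpd
    · have hdlt : A.det.re < 0 := det_neg_of_indef hAh hu hnpd hnnd
      obtain ⟨P, S, V, hPpd, hPdet, hSh, hSS, hVrefl, hSVS⟩ := indef_decomp hAh hdlt
      have hφA : Φ A = ε • Φ P := by
        rw [← hSVS, hjtp S V hSh hVrefl.1, hrefl hVrefl, mul_smul_comm, mul_one,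
          smul_mul_assoc, ← hmulself hSh, hSS]
      have hPd : Φ P = Φ (Matrix.diagonal ![-A.det, 1]) := by
        have := main_pd P hPpd
        rwa [hPdet] at this
      have hdim : A.det.im = 0 := herm_det_im hAh
      set r : ℝ := Real.sqrt (-A.det.re) with hr
      have hrpos : 0 < r := Real.sqrt_pos.mpr (by linarith)
      have hr2 : ((r : ℂ)) * (r : ℂ) = -A.det := by
        rw [← Complex.ofReal_mul, Real.mul_self_sqrt (by linarith)]
        exact Complex.ext (by simp) (by simp [hdim])
      set S'' : M2 := Matrix.diagonal ![(r : ℂ), 1] with hS''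
      set V'' : M2 := Matrix.diagonal ![(-1 : ℂ), 1] with hV''
      have hS''h : S''.IsHermitian := diagherm _ _ (by simp) (by simp)
      have hV''refl : Refl V'' := by
        refine ⟨diagherm _ _ (by simp) (by simp), ?_, ?_⟩
        · simp [hV'', Matrix.trace_fin_two, Matrix.diagonal_apply]
        · ext i j
          fin_cases i <;> fin_cases j <;>
            simp [hV'', Matrix.mul_apply, Fin.sum_univ_two, Matrix.diagonal_apply,
              Matrix.one_apply]
      have hcomp : S'' * V'' * S'' = Matrix.diagonal ![A.det, 1] := by
        ext i j
        fin_cases i <;> fin_cases j <;>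
          simp [hS'', hV'', Matrix.mul_apply, Fin.sum_univ_two, Matrix.diagonal_apply]
        linear_combination -hr2
      have hS''S'' : S'' * S'' = Matrix.diagonal ![-A.det, 1] := by
        ext i j
        fin_cases i <;> fin_cases j <;>
          simp [hS'', Matrix.mul_apply, Fin.sum_univ_two, Matrix.diagonal_apply, hr2]
      have hφD : Φ (Matrix.diagonal ![A.det, 1])
          = ε • Φ (Matrix.diagonal ![-A.det, 1]) := by
        rw [← hcomp, hjtp S'' V'' hS''h hV''refl.1, hrefl hV''refl, mul_smul_comm,
          mul_one, smul_mul_assoc, ← hmulself hS''h, hS''S'']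
      rw [hφA, hPd, hφD]
  · intro A hAh hnegpd
    obtain ⟨S, hSh, hSS, -⟩ := posdef_sqrt hnegpd
    have hAeq : S * (-1) * S = A := by
      rw [mul_neg, mul_one, Matrix.neg_mul, hSS, neg_neg]
    have hm1h : (-1 : M2).IsHermitian := by
      rw [Matrix.IsHermitian, Matrix.conjTranspose_neg, Matrix.conjTranspose_one]
    have hδδ : Φ (-1) * Φ (-1) = 1 := by
      have e := hjtp (-1) 1 hm1h Matrix.isHermitian_one
      rw [show ((-1 : M2) * 1 * (-1 : M2)) = 1 by simp, h1, mul_one] at e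
      exact e.symm
    have hcommδ : Φ (-1) * Φ S = Φ S * Φ (-1) := by
      have e := hjtp (-1) S hm1h hSh
      rw [show ((-1 : M2) * S * (-1 : M2)) = S by simp] at e
      calc Φ (-1) * Φ S = Φ (-1) * (Φ (-1) * Φ S * Φ (-1)) := by rw [← e]
        _ = (Φ (-1) * Φ (-1)) * (Φ S * Φ (-1)) := by
            rw [← mul_assoc, ← mul_assoc, mul_assoc (Φ (-1) * Φ (-1))]
        _ = Φ S * Φ (-1) := by rw [hδδ, one_mul]
    have hdetneg : (-A).det = A.det := by
      rw [Matrix.det_fin_two, Matrix.det_fin_two]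
      simp [Matrix.neg_apply]
    calc Φ A = Φ (S * (-1) * S) := by rw [hAeq]
      _ = Φ S * Φ (-1) * Φ S := hjtp S (-1) hSh hm1h
      _ = Φ (-1) * Φ S * Φ S := by rw [← hcommδ]
      _ = Φ (-1) * Φ (S * S) := by rw [mul_assoc, ← hmulself hSh]
      _ = Φ (-1) * Φ (-A) := by rw [hSS]
      _ = Φ (-1) * Φ (Matrix.diagonal ![(-A).det, 1]) := by rw [main_pd (-A) hnegpd]
      _ = Φ (-1) * Φ (Matrix.diagonal ![A.det, 1]) := by rw [hdetneg]
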